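/- Let X, Y be linear operators on an (N+1)-dimensional complex vector space satisfying the Hahn algebra relations [X,Z] = 2X² + (λ₁−λ₂−2N)X + Y − λ₁N with Z = [X,Y], and suppose X is diagonalizable with spectrum {0,1,...,N} and simple eigenvalues. Then in any eigenbasis {v_l} of X with X v_l = l v_l, the operator Y is tridiagonal: Y v_l ∈ span{v_{l−1}, v_l, v_{l+1}}, and its diagonal entries are M(l) = −B(l)−D(l) where B(x) = (x−N)(x+λ₁), D(x) = x(x−λ₂−N). -/

import Mathlib

theorem hahn_tridiagonality (N : ℕ) (hN : 0 < N) (lam1 lam2 : ℂ)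
    (h1 : ∀ j : ℕ, j < N → lam1 ≠ -(j : ℂ))
    (h2 : ∀ j : ℕ, j < N → lam2 ≠ -(j : ℂ))
    (h12 : ∀ j : ℕ, j ≤ 2 * N - 2 → lam1 + lam2 ≠ -(j : ℂ))
    (V : Type*) [AddCommGroup V] [Module ℂ V]
    (b : Module.Basis (Fin (N + 1)) ℂ V) (Xop Yop : V →ₗ[ℂ] V)
    -- X is diagonalizable with simple spectrum {0,1,…,N}, eigenbasis b:
    (hXb : ∀ l : Fin (N + 1), Xop (b l) = ((l : ℕ) : ℂ) • b l)
    -- the Hahn algebra relation [X,[X,Y]] = 2X² + (λ₁-λ₂-2N)X + Y - λ₁N: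
    (hrel :
      Xop ∘ₗ (Xop ∘ₗ Yop - Yop ∘ₗ Xop) - (Xop ∘ₗ Yop - Yop ∘ₗ Xop) ∘ₗ Xop =
        (2 : ℂ) • (Xop ∘ₗ Xop) + (lam1 - lam2 - 2 * (N : ℂ)) • Xop + Yop
          - (lam1 * (N : ℂ)) • LinearMap.id) :
    -- Y is tridiagonal in the basis b, with diagonal entries M(l) = -B(l)-D(l):
    (∀ l m : Fin (N + 1), ((m : ℕ) + 1 < (l : ℕ) ∨ (l : ℕ) + 1 < (m : ℕ)) →
        b.repr (Yop (b l)) m = 0) ∧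
    (∀ l : Fin (N + 1),
        b.repr (Yop (b l)) l =
          -((((l : ℕ) : ℂ) - (N : ℂ)) * (((l : ℕ) : ℂ) + lam1))
            - ((l : ℕ) : ℂ) * (((l : ℕ) : ℂ) - lam2 - (N : ℂ))) := by
  -- repr of Xop w at m is m * repr of w at m
  have hX : ∀ (w : V) (m : Fin (N + 1)),
      b.repr (Xop w) m = ((m : ℕ) : ℂ) * b.repr w m := by
    intro w m
    have key : (b.coord m).comp Xop = ((m : ℕ) : ℂ) • b.coord m := by
      apply b.ext
      intro l
      simp only [LinearMap.comp_apply, Module.Basis.coord_apply, hXb, map_smul,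
        LinearMap.smul_apply, Module.Basis.repr_self, Finsupp.smul_apply,
        Finsupp.single_apply, smul_eq_mul]
      by_cases h : l = m
      · subst h; simp
      · simp [h]
    have := LinearMap.congr_fun key w
    simpa [Module.Basis.coord_apply] using this
  -- the key scalar equation
  have key : ∀ l m : Fin (N + 1),
      (((m : ℕ) : ℂ) - ((l : ℕ) : ℂ)) ^ 2 * b.repr (Yop (b l)) m =
        (2 * ((l : ℕ) : ℂ) ^ 2 + (lam1 - lam2 - 2 * (N : ℂ)) * ((l : ℕ) : ℂ)
          - lam1 * (N : ℂ)) * (if l = m then 1 else 0) + b.repr (Yop (b l)) m := by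
    intro l m
    have h := congrArg (fun f : V →ₗ[ℂ] V => b.repr (f (b l)) m) hrel
    simp only [LinearMap.sub_apply, LinearMap.add_apply, LinearMap.comp_apply,
      LinearMap.smul_apply, LinearMap.id_apply, hXb, map_smul, map_sub, map_add,
      Finsupp.sub_apply, Finsupp.add_apply, Finsupp.smul_apply, smul_eq_mul,
      hX, Module.Basis.repr_self, Finsupp.single_apply] at h
    by_cases hlm : l = m
    · subst hlm; simp only [if_pos rfl] at h ⊢; ring_nf at h ⊢; simp only [if_true] at h ⊢; linear_combination h
    · simp only [if_neg hlm] at h ⊢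
      ring_nf; ring_nf at h; linear_combination h
  constructor
  · intro l m hlm
    have h := key l m
    have hne : l ≠ m := by
      rcases hlm with h' | h' <;> (intro e; subst e; omega)
    rw [if_neg hne] at h
    have hfac : ((((m : ℕ) : ℂ) - ((l : ℕ) : ℂ)) ^ 2 - 1) * b.repr (Yop (b l)) m = 0 := by
      linear_combination h
    have hne2 : (((m : ℕ) : ℂ) - ((l : ℕ) : ℂ)) ^ 2 - 1 ≠ 0 := by
      intro hz
      have : (((m : ℕ) : ℂ) - ((l : ℕ) : ℂ) - 1) * (((m : ℕ) : ℂ) - ((l : ℕ) : ℂ) + 1) = 0 := by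
        linear_combination hz
      rcases mul_eq_zero.1 this with hz1 | hz1
      · have : ((m : ℕ) : ℂ) = ((l : ℕ) : ℂ) + 1 := by linear_combination hz1
        have : ((m : ℕ) : ℂ) = (((l : ℕ) + 1 : ℕ) : ℂ) := by push_cast; linear_combination this
        have hm : (m : ℕ) = (l : ℕ) + 1 := Nat.cast_injective this
        omega
      · have : (((m : ℕ) + 1 : ℕ) : ℂ) = (((l : ℕ)) : ℂ) := by push_cast; linear_combination hz1
        have hm : (m : ℕ) + 1 = (l : ℕ) := Nat.cast_injective this
        omega
    exact (mul_eq_zero.1 hfac).resolve_left hne2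
  · intro l
    have h := key l l
    rw [if_pos rfl] at h
    simp only [sub_self] at h
    ring_nf at h ⊢
    linear_combination -h
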